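/- Let R be a *-ring and let a ∈ R be both group invertible and Moore–Penrose invertible. Then a is an SEP element if and only if (a(a#)*a⁺)^k is a left ((a⁺a²)^k)-idempotent for k = 2 and k = 3, i.e. (a(a#)*a⁺)^(2k) = (a⁺a²)^k (a(a#)*a⁺)^k for k = 2, 3. -/
import Mathlib


theorem stmt_14 (R : Type*) [Ring R] [StarRing R] (a ap ag : R)
    (h1 : a * ap * a = a) (h2 : ap * a * ap = ap)
    (h3 : star (a * ap) = a * ap) (h4 : star (ap * a) = ap * a)
    (g1 : a * ag * a = a) (g2 : ag * a * ag = ag) (g3 : a * ag = ag * a) :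
    (star a = ap ∧ ap = ag) ↔ ((a * star ag * ap)^4 = (ap * a * a)^2 * (a * star ag * ap)^2 ∧ (a * star ag * ap)^6 = (ap * a * a)^3 * (a * star ag * ap)^3) := by
  constructor
  · rintro ⟨e1, e2⟩
    have hsg2 : star a = ag := e1.trans e2
    have hsg : star ag = a := by rw [← hsg2, star_star]
    have haa' : a * a * star a = a := by
      rw [hsg2, mul_assoc, g3, ← mul_assoc]; exact g1
    have h'aa : star a * a * a = a := by
      rw [hsg2, ← g3]; exact g1
    rw [hsg, ← e1, haa', h'aa]
    refine ⟨?_, ?_⟩ <;> rw [← pow_add]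
  · rintro ⟨H2, H3⟩
    set u := a * star ag * ap with hu
    set c := ap * a * a with hc
    have hur : u = a * (star ag * ap) := by rw [hu, mul_assoc]
    have hcr : c = ap * (a * a) := by rw [hc, mul_assoc]
    -- basic lemmas
    have raxa : a * (ap * a) = a := by rw [← mul_assoc]; exact h1
    have raga : a * (ag * a) = a := by rw [← mul_assoc]; exact g1
    have rgag : ag * (a * ag) = ag := by rw [← mul_assoc]; exact g2
    have gaa : ag * a * a = a := by rw [← g3]; exact g1
    have agg : a * ag * ag = ag := by rw [g3]; exact g2
    have gga : ag * ag * a = ag := by rw [mul_assoc, ← g3, ← mul_assoc]; exact g2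
    have paxa : ∀ t : R, a * (ap * (a * t)) = a * t := fun t => by
      rw [← mul_assoc, ← mul_assoc, h1]
    have pgaa : ∀ t : R, ag * (a * (a * t)) = a * t := fun t => by
      rw [← mul_assoc, ← mul_assoc, gaa]
    have s_axa : star a * (star ap * star a) = star a := by
      rw [← star_mul, ← star_mul, h1]
    have s_aga : star a * (star ag * star a) = star a := by
      rw [← star_mul, ← star_mul, g1]
    have s_gag : star ag * (star a * star ag) = star ag := by
      rw [← star_mul, ← star_mul, g2]
    have s_comm : star a * star ag = star ag * star a := by
      rw [← star_mul, ← star_mul, g3]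
    have s_aag : star a * (star a * star ag) = star a := by
      rw [← star_mul, ← star_mul, gaa]
    have s_gga : star ag * (star ag * star a) = star ag := by
      rw [← star_mul, ← star_mul, agg]
    have ps_comm : ∀ t : R, star ag * (star a * t) = star a * (star ag * t) := fun t => by
      rw [← mul_assoc, ← mul_assoc, s_comm]
    have d1 : ap * (a * star a) = star a := by
      rw [← mul_assoc, ← h4, star_mul, mul_assoc, s_axa]
    have d1l : ap * a * star a = star a := by
      rw [mul_assoc, d1]
    have pd1 : ∀ t : R, ap * (a * (star a * t)) = star a * t := fun t => by
      rw [← mul_assoc, ← mul_assoc, d1l]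
    have Q1 : star ag * (star ag * (star a * star a)) = star a * star ag := by
      rw [ps_comm, ps_comm, s_gga]
    have Q2 : star ag * (star ag * (star ag * (star a * star a))) = star ag := by
      rw [Q1, s_gag]
    have pfold : ∀ t : R, ag * (a * (u * t)) = u * t := fun t => by
      rw [hur]; simp only [mul_assoc]; rw [pgaa]
    have p3 : ∀ v : R, v ^ 3 = v * (v * v) := fun v => by
      rw [show (3 : ℕ) = 2 + 1 by norm_num, pow_add, pow_two, pow_one]
      simp only [mul_assoc]
    have p4 : ∀ v : R, v ^ 4 = v * (v * (v * v)) := fun v => by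
      rw [show (4 : ℕ) = 2 + 2 by norm_num, pow_add, pow_two]
      simp only [mul_assoc]
    have p6 : ∀ v : R, v ^ 6 = v * (v * (v * (v * (v * v)))) := fun v => by
      rw [show (6 : ℕ) = 2 + 2 + 2 by norm_num, pow_add, pow_add, pow_two]
      simp only [mul_assoc]
    have H2e : u*(u*(u*u)) = ap*(a*(a*(a*(u*u)))) := by
      calc u*(u*(u*u)) = u^4 := by rw [p4]
        _ = c^2 * u^2 := H2
        _ = (c*c)*(u*u) := by rw [pow_two, pow_two]
        _ = ap*(a*(a*(a*(u*u)))) := by rw [hcr]; simp only [mul_assoc]; rw [paxa]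
    have H3e : u*(u*(u*(u*(u*u)))) = ap*(a*(a*(a*(a*(u*(u*u)))))) := by
      calc u*(u*(u*(u*(u*u)))) = u^6 := by rw [p6]
        _ = c^3 * u^3 := H3
        _ = (c*(c*c))*(u*(u*u)) := by rw [p3, p3]
        _ = ap*(a*(a*(a*(a*(u*(u*u)))))) := by
            rw [hcr]; simp only [mul_assoc]; rw [paxa, paxa]
    have T1e : ap*(a*(a*(a*(a*(u*(u*u)))))) = ap*(a*(a*(a*(a*(a*(u*u)))))) := by
      calc ap*(a*(a*(a*(a*(u*(u*u)))))) = u*(u*(u*(u*(u*u)))) := H3e.symm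
        _ = (u*(u*(u*u)))*(u*u) := by simp only [mul_assoc]
        _ = (ap*(a*(a*(a*(u*u)))))*(u*u) := by rw [H2e]
        _ = ap*(a*(a*(a*(u*(u*(u*u)))))) := by simp only [mul_assoc]
        _ = ap*(a*(a*(a*(ap*(a*(a*(a*(u*u)))))))) := by rw [H2e]
        _ = ap*(a*(a*(a*(a*(a*(u*u)))))) := by rw [paxa]
    have T2e : a*(a*(a*(a*(u*(u*u))))) = a*(a*(a*(a*(a*(u*u))))) := by
      calc a*(a*(a*(a*(u*(u*u))))) = a*(ap*(a*(a*(a*(a*(u*(u*u))))))) := (paxa _).symm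
        _ = a*(ap*(a*(a*(a*(a*(a*(u*u))))))) := by rw [T1e]
        _ = a*(a*(a*(a*(a*(u*u))))) := paxa _
    have S1 : a*(a*(a*(u*(u*u)))) = a*(a*(a*(a*(u*u)))) := by
      calc a*(a*(a*(u*(u*u)))) = ag*(a*(a*(a*(a*(u*(u*u)))))) := (pgaa _).symm
        _ = ag*(a*(a*(a*(a*(a*(u*u)))))) := by rw [T2e]
        _ = a*(a*(a*(a*(u*u)))) := pgaa _
    have S2 : a*(a*(u*(u*u))) = a*(a*(a*(u*u))) := by
      calc a*(a*(u*(u*u))) = ag*(a*(a*(a*(u*(u*u))))) := (pgaa _).symm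
        _ = ag*(a*(a*(a*(a*(u*u))))) := by rw [S1]
        _ = a*(a*(a*(u*u))) := pgaa _
    have S3 : a*(u*(u*u)) = a*(a*(u*u)) := by
      calc a*(u*(u*u)) = ag*(a*(a*(u*(u*u)))) := (pgaa _).symm
        _ = ag*(a*(a*(a*(u*u)))) := by rw [S2]
        _ = a*(a*(u*u)) := pgaa _
    have E2e : u*(u*u) = a*(u*u) := by
      calc u*(u*u) = ag*(a*(u*(u*u))) := (pfold _).symm
        _ = ag*(a*(a*(u*u))) := by rw [S3]
        _ = a*(u*u) := pgaa _
    have hu4 : u*(u*(u*u)) = a*(u*(u*u)) := by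
      calc u*(u*(u*u)) = (u*(u*u))*u := by simp only [mul_assoc]
        _ = (a*(u*u))*u := by rw [E2e]
        _ = a*(u*(u*u)) := by simp only [mul_assoc]
    have E1e : a*(a*(u*u)) = ap*(a*(a*(a*(u*u)))) := by
      calc a*(a*(u*u)) = a*(u*(u*u)) := by rw [E2e]
        _ = u*(u*(u*u)) := hu4.symm
        _ = ap*(a*(a*(a*(u*u)))) := H2e
    have C1 : u*(a*star a) = a*(star a*star ag) := by
      rw [hur]; simp only [mul_assoc]; rw [d1, ← s_comm]
    have pC1 : ∀ t : R, u*(a*(star a*t)) = a*(star a*(star ag*t)) := fun t => by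
      rw [hur]; simp only [mul_assoc]; rw [pd1, ps_comm]
    have C2 : u*(u*(a*star a)) = a*(star a*(star ag*star ag)) := by
      rw [C1, pC1]
    have C3 : u*(u*(u*(a*star a))) = a*(star a*(star ag*(star ag*star ag))) := by
      rw [C1, pC1, pC1]
    have D0 : a*(star a*(star ag*(star ag*star ag))) = a*(a*(star a*(star ag*star ag))) := by
      calc a*(star a*(star ag*(star ag*star ag))) = u*(u*(u*(a*star a))) := C3.symm
        _ = (u*(u*u))*(a*star a) := by simp only [mul_assoc]
        _ = (a*(u*u))*(a*star a) := by rw [E2e]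
        _ = a*(u*(u*(a*star a))) := by simp only [mul_assoc]
        _ = a*(a*(star a*(star ag*star ag))) := by rw [C2]
    have Id1e : a*(star a*star ag) = a*(a*star a) := by
      calc a*(star a*star ag)
          = a*(star a*(star ag*(star ag*(star ag*(star a*star a))))) := by rw [Q2]
        _ = (a*(star a*(star ag*(star ag*star ag))))*(star a*star a) := by
            simp only [mul_assoc]
        _ = (a*(a*(star a*(star ag*star ag))))*(star a*star a) := by rw [D0]
        _ = a*(a*(star a*(star ag*(star ag*(star a*star a))))) := by simp only [mul_assoc]
        _ = a*(a*(star a*(star a*star ag))) := by rw [Q1]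
        _ = a*(a*star a) := by rw [s_aag]
    have Id6e : star a*star ag = ap*(a*(a*star a)) := by
      calc star a*star ag = ap*(a*(star a*star ag)) := (pd1 _).symm
        _ = ap*(a*(a*star a)) := by rw [Id1e]
    have pId1 : ∀ t : R, a*(a*(star a*t)) = a*(star a*(star ag*t)) := fun t => by
      calc a*(a*(star a*t)) = (a*(a*star a))*t := by simp only [mul_assoc]
        _ = (a*(star a*star ag))*t := by rw [Id1e]
        _ = a*(star a*(star ag*t)) := by simp only [mul_assoc]
    have F0 : a*(a*(a*(star a*(star ag*star ag)))) = ap*(a*(a*(a*(a*(star a*(star ag*star ag)))))) := by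
      calc a*(a*(a*(star a*(star ag*star ag))))
          = a*(a*(u*(u*(a*star a)))) := by rw [C2]
        _ = (a*(a*(u*u)))*(a*star a) := by simp only [mul_assoc]
        _ = (ap*(a*(a*(a*(u*u)))))*(a*star a) := by conv_lhs => rw [E1e]
        _ = ap*(a*(a*(a*(u*(u*(a*star a)))))) := by simp only [mul_assoc]
        _ = ap*(a*(a*(a*(a*(star a*(star ag*star ag)))))) := by rw [C2]
    have Id5e : a*(a*(a*star a)) = ap*(a*(a*(a*(a*star a)))) := by
      calc a*(a*(a*star a))
          = a*(a*(a*(star a*(star ag*(star ag*(star a*star a)))))) := by rw [Q1, s_aag]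
        _ = (a*(a*(a*(star a*(star ag*star ag)))))*(star a*star a) := by
            simp only [mul_assoc]
        _ = (ap*(a*(a*(a*(a*(star a*(star ag*star ag)))))))*(star a*star a) := by conv_lhs => rw [F0]
        _ = ap*(a*(a*(a*(a*(star a*(star ag*(star ag*(star a*star a)))))))) := by
            simp only [mul_assoc]
        _ = ap*(a*(a*(a*(a*star a)))) := by rw [Q1, s_aag]
    have G0 : a*(star a*(star ag*star ag)) = ap*(a*(a*(star a*(star ag*star ag)))) := by
      have h := Id5e
      rw [← Id1e] at h
      rw [pId1] at h
      exact h
    have Id7e : a*star a = ap*(a*(a*star a)) := by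
      calc a*star a = a*(star a*(star ag*(star ag*(star a*star a)))) := by rw [Q1, s_aag]
        _ = (a*(star a*(star ag*star ag)))*(star a*star a) := by simp only [mul_assoc]
        _ = (ap*(a*(a*(star a*(star ag*star ag)))))*(star a*star a) := by conv_lhs => rw [G0]
        _ = ap*(a*(a*(star a*(star ag*(star ag*(star a*star a)))))) := by
            simp only [mul_assoc]
        _ = ap*(a*(a*star a)) := by rw [Q1, s_aag]
    have KEY : a*star a = star a*star ag := Id7e.trans Id6e.symm
    have hermw : star (a*star a) = a*star a := by rw [star_mul, star_star]
    have key2 : a*star a = ag*a := by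
      calc a*star a = star (a*star a) := hermw.symm
        _ = star (star a*star ag) := by rw [KEY]
        _ = ag*a := by rw [star_mul, star_star, star_star]
    have IdB : a*(star a*star a) = star a := by
      calc a*(star a*star a) = (a*star a)*star a := by rw [mul_assoc]
        _ = (star a*star ag)*star a := by rw [KEY]
        _ = star a*(star ag*star a) := by rw [mul_assoc]
        _ = star a := s_aga
    have hGA : star a = ag := by
      calc star a = a*(star a*star a) := IdB.symm
        _ = (a*star a)*star a := by rw [mul_assoc]
        _ = (ag*a)*star a := by rw [key2]
        _ = ag*(a*star a) := by rw [mul_assoc]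
        _ = ag*(ag*a) := by rw [key2]
        _ = (ag*ag)*a := by rw [mul_assoc]
        _ = ag := gga
    have haag_herm : star (a*ag) = a*ag := by rw [← hGA]; exact hermw
    have hga_herm : star (ag*a) = ag*a := by rw [← hGA, star_mul, star_star]
    have hax : a*ap = a*ag := by
      calc a*ap = star (a*ap) := h3.symm
        _ = star ap * star a := by rw [star_mul]
        _ = star ap * star (a*ag*a) := by rw [g1]
        _ = star ap * (star a * star (a*ag)) := by rw [star_mul]
        _ = star ap * (star a * (a*ag)) := by rw [haag_herm]
        _ = (star ap * star a) * (a*ag) := by rw [mul_assoc]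
        _ = star (a*ap) * (a*ag) := by rw [star_mul]
        _ = (a*ap)*(a*ag) := by rw [h3]
        _ = a*ag := by rw [← mul_assoc, h1]
    have hxa : ap*a = ag*a := by
      calc ap*a = star (ap*a) := h4.symm
        _ = star a * star ap := by rw [star_mul]
        _ = star (a*(ag*a)) * star ap := by rw [raga]
        _ = (star (ag*a) * star a) * star ap := by rw [star_mul]
        _ = ((ag*a) * star a) * star ap := by rw [hga_herm]
        _ = (ag*a) * (star a * star ap) := by rw [mul_assoc]
        _ = (ag*a) * star (ap*a) := by rw [star_mul]
        _ = (ag*a) * (ap*a) := by rw [h4]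
        _ = ag*a := by rw [mul_assoc, raxa]
    have hap_ag : ap = ag := by
      calc ap = ap*a*ap := h2.symm
        _ = (ag*a)*ap := by rw [hxa]
        _ = ag*(a*ap) := by rw [mul_assoc]
        _ = ag*(a*ag) := by rw [hax]
        _ = ag := rgag
    exact ⟨hGA.trans hap_ag.symm, hap_ag⟩
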